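/- Let F be a field of characteristic 2 and let u ∈ F((x⁻¹)) be irrational with partial quotients p₀, p₁, … and complete quotients u₀, u₁, …. Suppose Q, R, S, T ∈ F[x] with S ≠ 0, D := Q·T − R·S ≠ 0, S·uⱼ² + T ≠ 0, and uᵢ = (Q·uⱼ² + R)/(S·uⱼ² + T) for some indices i, j. If deg(S·uⱼ²) > deg T and deg S + deg(S·uⱼ²) > deg D, then the partial quotient pᵢ = ⌊uᵢ⌋ equals the quotient upon polynomial division of Q by S; this follows since uᵢ − Q/S = −D/(S·(S·uⱼ² + T)). -/

import Mathlib

open Polynomial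
open scoped Classical

noncomputable section

namespace PaperCF

/-- The element `x` of `F((x⁻¹))`, realized as the Hahn series `T⁻¹` where `T` is the
Hahn-series variable (so a series in `x⁻¹` has well-ordered support in `T`). -/
def xx (F : Type*) [Field F] : LaurentSeries F := HahnSeries.single (-1 : ℤ) 1

/-- Embedding of the polynomial ring `F[x]` into `F((x⁻¹))`, `x ↦ xx`. -/
def polyEmb (F : Type*) [Field F] : Polynomial F →+* LaurentSeries F :=
  (Polynomial.aeval (xx F)).toRingHom

/-- The degree of a Laurent series in `x⁻¹` (largest exponent of `x` with nonzero
coefficient), with `deg 0 = ⊥`. -/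
def degB (F : Type*) [Field F] (u : LaurentSeries F) : WithBot ℤ :=
  if u = 0 then ⊥ else (-u.order : ℤ)

/-- The non-archimedean absolute value `|u| = q ^ deg u` (and `|0| = 0`). -/
def absVal (F : Type*) [Field F] (q : ℝ) (u : LaurentSeries F) : ℝ :=
  if u = 0 then 0 else q ^ (-u.order)

/-- `u` is irrational: it is not a ratio of two polynomials in `x`. -/
def IsIrrational (F : Type*) [Field F] (u : LaurentSeries F) : Prop :=
  ∀ a b : Polynomial F, b ≠ 0 → u * polyEmb F b ≠ polyEmb F a

/-- The (necessarily unique, non-terminating) continued fraction expansion of `u`: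
`p i` are the partial quotients, `U i` the complete quotients.  The condition
`0 < (U i - p i).order` says exactly that `p i` is the integral part of `U i`
(the difference has only negative powers of `x`). -/
structure CFExpansion (F : Type*) [Field F] (u : LaurentSeries F) where
  p : ℕ → Polynomial F
  U : ℕ → LaurentSeries F
  U_zero : U 0 = u
  ne : ∀ i, U i ≠ polyEmb F (p i)
  intPart : ∀ i, 0 < (U i - polyEmb F (p i)).order
  step : ∀ i, U (i + 1) = (U i - polyEmb F (p i))⁻¹

/-- Numerators `aₙ` of the convergents: `aₙ = pₙ aₙ₋₁ + aₙ₋₂`. -/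
def convNum {F : Type*} [Field F] (p : ℕ → Polynomial F) : ℕ → Polynomial F
  | 0 => p 0
  | 1 => p 1 * p 0 + 1
  | (n + 2) => p (n + 2) * convNum p (n + 1) + convNum p n

/-- Denominators `bₙ` of the convergents: `bₙ = pₙ bₙ₋₁ + bₙ₋₂`. -/
def convDen {F : Type*} [Field F] (p : ℕ → Polynomial F) : ℕ → Polynomial F
  | 0 => 1
  | 1 => p 1
  | (n + 2) => p (n + 2) * convDen p (n + 1) + convDen p n

/-- The `n`-th convergent `cₙ = aₙ/bₙ = [p₀; p₁, …, pₙ]`. -/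
def conv (F : Type*) [Field F] (p : ℕ → Polynomial F) (n : ℕ) : LaurentSeries F :=
  polyEmb F (convNum p n) / polyEmb F (convDen p n)

/-- `u` has bounded partial quotients. -/
def HasBoundedPQ (F : Type*) [Field F] (u : LaurentSeries F) : Prop :=
  ∃ cf : CFExpansion F u, ∃ N : ℕ, ∀ i, (cf.p i).natDegree ≤ N

/-- The integral part `⌊u⌋ ∈ F[x]`: the sum of the terms of `u` of nonnegative degree. -/
def intPart (F : Type*) [Field F] (u : LaurentSeries F) : Polynomial F :=
  ∑ n ∈ Finset.Icc (0 : ℤ) (-u.order), Polynomial.monomial n.toNat (u.coeff (-n))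

/-- The sequence of complete quotients produced by the continued fraction algorithm
(with junk value `0⁻¹ = 0` after termination). -/
def cqSeq (F : Type*) [Field F] (u : LaurentSeries F) : ℕ → LaurentSeries F
  | 0 => u
  | n + 1 => (cqSeq F u n - polyEmb F (intPart F (cqSeq F u n)))⁻¹


section Helpers

variable {F : Type*} [Field F]

lemma polyEmb_eq_sum (P : Polynomial F) :
    polyEmb F P = P.sum fun e a => HahnSeries.single (-(e : ℤ)) a := by
  have h : polyEmb F P = Polynomial.eval₂ (algebraMap F (LaurentSeries F)) (xx F) P := rfl
  rw [h, Polynomial.eval₂_eq_sum, Polynomial.sum_def, Polynomial.sum_def]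
  refine Finset.sum_congr rfl fun e _ => ?_
  have ha : algebraMap F (LaurentSeries F) (P.coeff e) = HahnSeries.single (0:ℤ) (P.coeff e) := by
    rw [HahnSeries.algebraMap_apply']
    have h2 : algebraMap F (PowerSeries F) (P.coeff e) = PowerSeries.C (P.coeff e) := rfl
    rw [h2, HahnSeries.ofPowerSeries_C, HahnSeries.C_apply]
  rw [xx, HahnSeries.single_pow, ha, HahnSeries.single_mul_single]
  simp

lemma coeff_polyEmb (P : Polynomial F) (n : ℕ) :
    (polyEmb F P).coeff (-(n : ℤ)) = P.coeff n := by
  rw [polyEmb_eq_sum, Polynomial.sum_def]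
  rw [show ((∑ e ∈ P.support, HahnSeries.single (-(e:ℤ)) (P.coeff e)).coeff (-(n:ℤ)))
      = ∑ e ∈ P.support, (HahnSeries.single (-(e:ℤ)) (P.coeff e)).coeff (-(n:ℤ)) from
    map_sum (HahnSeries.coeff.addMonoidHom (-(n:ℤ))) _ _]
  simp only [HahnSeries.coeff_single, neg_inj, Nat.cast_inj]
  by_cases hn : n ∈ P.support
  · rw [Finset.sum_eq_single n]
    · simp
    · intro b _ hb
      have : ¬ n = b := fun h => hb h.symm
      simp [this]
    · intro h; exact absurd hn h
  · rw [Polynomial.notMem_support_iff.mp hn, Finset.sum_eq_zero]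
    intro e he
    have : n ≠ e := fun h => hn (h ▸ he)
    simp [this]

lemma coeff_polyEmb_pos (P : Polynomial F) (m : ℤ) (hm : 0 < m) :
    (polyEmb F P).coeff m = 0 := by
  rw [polyEmb_eq_sum, Polynomial.sum_def]
  rw [show ((∑ e ∈ P.support, HahnSeries.single (-(e:ℤ)) (P.coeff e)).coeff m)
      = ∑ e ∈ P.support, (HahnSeries.single (-(e:ℤ)) (P.coeff e)).coeff m from
    map_sum (HahnSeries.coeff.addMonoidHom m) _ _]
  refine Finset.sum_eq_zero fun e _ => ?_
  rw [HahnSeries.coeff_single]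
  have : m ≠ -(e : ℤ) := by omega
  simp [this]

lemma polyEmb_ne_zero {P : Polynomial F} (hP : P ≠ 0) : polyEmb F P ≠ 0 := by
  intro h
  have := coeff_polyEmb P P.natDegree
  rw [h] at this
  simp only [HahnSeries.coeff_zero] at this
  exact Polynomial.leadingCoeff_ne_zero.mpr hP this.symm

lemma polyEmb_injective : Function.Injective (polyEmb F) := by
  intro a b h
  by_contra hne
  exact polyEmb_ne_zero (sub_ne_zero.mpr hne) (by rw [map_sub, h, sub_self])

lemma order_polyEmb {P : Polynomial F} (hP : P ≠ 0) :
    (polyEmb F P).order = -(P.natDegree : ℤ) := by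
  refine le_antisymm ?_ ?_
  · apply HahnSeries.order_le_of_coeff_ne_zero
    rw [coeff_polyEmb]
    exact Polynomial.leadingCoeff_ne_zero.mpr hP
  · have h0 := mt HahnSeries.coeff_order_eq_zero.mp (polyEmb_ne_zero hP)
    set m := (polyEmb F P).order with hm
    by_contra hlt
    push_neg at hlt
    have hm0 : m ≤ 0 := by
      by_contra hpos
      exact h0 (coeff_polyEmb_pos P m (by omega))
    have : m = -((-m).toNat : ℤ) := by omega
    rw [this, coeff_polyEmb] at h0
    have := Polynomial.le_natDegree_of_ne_zero h0
    omega

lemma order_inv {u : LaurentSeries F} (hu : u ≠ 0) : (u⁻¹).order = -u.order := by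
  have h1 : u * u⁻¹ = 1 := mul_inv_cancel₀ hu
  have h2 := HahnSeries.order_mul hu (inv_ne_zero hu)
  rw [h1, HahnSeries.order_one] at h2
  omega

lemma order_div {u v : LaurentSeries F} (hu : u ≠ 0) (hv : v ≠ 0) :
    (u / v).order = u.order - v.order := by
  rw [div_eq_mul_inv, HahnSeries.order_mul hu (inv_ne_zero hv), order_inv hv]
  ring

lemma order_add_eq_left {x y : LaurentSeries F} (hx : x ≠ 0)
    (h : y = 0 ∨ x.order < y.order) : (x + y).order = x.order := by
  by_cases hy : y = 0
  · simp [hy]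
  · have h : x.order < y.order := h.resolve_left hy
    have hot : x.orderTop < y.orderTop := by
      rw [← HahnSeries.order_eq_orderTop_of_ne_zero hx, ← HahnSeries.order_eq_orderTop_of_ne_zero hy]
      exact_mod_cast h
    have := HahnSeries.orderTop_add_eq_left hot
    have hxy : x + y ≠ 0 := by
      intro h0
      rw [h0, HahnSeries.orderTop_zero, HahnSeries.orderTop_of_ne_zero hx] at this
      exact WithTop.coe_ne_top this.symm
    rw [← HahnSeries.order_eq_orderTop_of_ne_zero hxy, ← HahnSeries.order_eq_orderTop_of_ne_zero hx] at this
    exact_mod_cast this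

lemma pos_order_add {x y : LaurentSeries F}
    (hx : x = 0 ∨ 0 < x.order) (hy : y = 0 ∨ 0 < y.order) :
    x + y = 0 ∨ 0 < (x + y).order := by
  by_cases h : x + y = 0
  · exact Or.inl h
  · right
    rcases hx with rfl | hx
    · simpa using hy.resolve_left (by simpa using h)
    rcases hy with rfl | hy
    · simpa using hx
    have := HahnSeries.min_order_le_order_add h
    omega


end Helpers

/-- the main computational principle: if `deg(S·uⱼ²) > deg T` and
`deg S + deg(S·uⱼ²) > deg D`, then `pᵢ` is the quotient of `Q` by `S`, which follows
from `uᵢ - Q/S = -D/(S(Suⱼ²+T))`. -/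
theorem statement16 (F : Type*) [Field F] [CharP F 2] (u : LaurentSeries F)
    (hu : IsIrrational F u) (cf : CFExpansion F u)
    (Q R S T : Polynomial F) (i j : ℕ)
    (hS : S ≠ 0) (hD : Q * T - R * S ≠ 0)
    (hden : polyEmb F S * (cf.U j) ^ 2 + polyEmb F T ≠ 0)
    (heq : cf.U i = (polyEmb F Q * (cf.U j) ^ 2 + polyEmb F R) /
      (polyEmb F S * (cf.U j) ^ 2 + polyEmb F T))
    (h1 : degB F (polyEmb F T) < degB F (polyEmb F S * (cf.U j) ^ 2))
    (h2 : degB F (polyEmb F (Q * T - R * S))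
      < degB F (polyEmb F S) + degB F (polyEmb F S * (cf.U j) ^ 2)) :
    cf.p i = Q / S ∧
    cf.U i - polyEmb F Q / polyEmb F S
      = -polyEmb F (Q * T - R * S) /
        (polyEmb F S * (polyEmb F S * (cf.U j) ^ 2 + polyEmb F T)) := by
  classical
  have hSE : polyEmb F S ≠ 0 := polyEmb_ne_zero hS
  have hDE : polyEmb F (Q * T - R * S) ≠ 0 := polyEmb_ne_zero hD
  have hW : polyEmb F S * (cf.U j) ^ 2 ≠ 0 := by
    intro h0
    simp only [degB] at h1
    rw [if_pos h0] at h1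
    exact not_lt_bot h1
  have hVorder : (polyEmb F S * (cf.U j) ^ 2 + polyEmb F T).order
      = (polyEmb F S * (cf.U j) ^ 2).order := by
    by_cases hT : T = 0
    · rw [hT, map_zero, add_zero]
    · have hTE : polyEmb F T ≠ 0 := polyEmb_ne_zero hT
      refine order_add_eq_left hW (Or.inr ?_)
      rw [degB, if_neg hTE, degB, if_neg hW] at h1
      have := WithBot.coe_lt_coe.mp h1
      omega
  rw [degB, if_neg hDE, degB, if_neg hSE, degB, if_neg hW, ← WithBot.coe_add] at h2
  have h2' := WithBot.coe_lt_coe.mp h2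
  have key : cf.U i - polyEmb F Q / polyEmb F S
      = -polyEmb F (Q * T - R * S) /
        (polyEmb F S * (polyEmb F S * (cf.U j) ^ 2 + polyEmb F T)) := by
    rw [heq, map_sub, map_mul, map_mul]
    rw [div_sub_div _ _ hden hSE, div_eq_div_iff (mul_ne_zero hden hSE) (mul_ne_zero hSE hden)]
    ring
  refine ⟨?_, key⟩
  -- part 1
  have hqr : S * (Q / S) + Q % S = Q := EuclideanDomain.div_add_mod Q S
  have hrdeg : (Q % S).degree < S.degree := EuclideanDomain.mod_lt _ hS
  have hV : polyEmb F S * (cf.U j) ^ 2 + polyEmb F T ≠ 0 := hden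
  have hA : 0 < (-polyEmb F (Q * T - R * S) /
      (polyEmb F S * (polyEmb F S * (cf.U j) ^ 2 + polyEmb F T))).order := by
    rw [order_div (neg_ne_zero.mpr hDE) (mul_ne_zero hSE hV), HahnSeries.order_neg,
      HahnSeries.order_mul hSE hV, hVorder]
    omega
  have hB : polyEmb F (Q % S) / polyEmb F S = 0 ∨
      0 < (polyEmb F (Q % S) / polyEmb F S).order := by
    by_cases hr0 : Q % S = 0
    · left; rw [hr0, map_zero, zero_div]
    · right
      have hrE : polyEmb F (Q % S) ≠ 0 := polyEmb_ne_zero hr0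
      rw [order_div hrE hSE, order_polyEmb hr0, order_polyEmb hS]
      have := Polynomial.natDegree_lt_natDegree hr0 hrdeg
      omega
  have hC : 0 < ((polyEmb F (cf.p i)) - cf.U i).order := by
    rw [← neg_sub, HahnSeries.order_neg]
    exact cf.intPart i
  have hsplit : polyEmb F Q / polyEmb F S
      = polyEmb F (Q / S) + polyEmb F (Q % S) / polyEmb F S := by
    have hQ : polyEmb F Q = polyEmb F S * polyEmb F (Q / S) + polyEmb F (Q % S) := by
      rw [← map_mul, ← map_add, hqr]
    rw [hQ]
    field_simp
  have hsum : cf.U i - polyEmb F (Q / S)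
      = (-polyEmb F (Q * T - R * S) /
          (polyEmb F S * (polyEmb F S * (cf.U j) ^ 2 + polyEmb F T)))
        + polyEmb F (Q % S) / polyEmb F S := by
    rw [← key, hsplit]
    ring
  have hpos : cf.U i - polyEmb F (Q / S) = 0 ∨
      0 < (cf.U i - polyEmb F (Q / S)).order := by
    rw [hsum]
    exact pos_order_add (Or.inr hA) hB
  have hd : polyEmb F (cf.p i - Q / S)
      = (cf.U i - polyEmb F (Q / S)) + ((polyEmb F (cf.p i)) - cf.U i) := by
    rw [map_sub]; ring
  have hfin : polyEmb F (cf.p i - Q / S) = 0 ∨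
      0 < (polyEmb F (cf.p i - Q / S)).order := by
    rw [hd]
    exact pos_order_add hpos (Or.inr hC)
  have hp : cf.p i - Q / S = 0 := by
    by_contra hne
    have hnz := polyEmb_ne_zero (F := F) hne
    rcases hfin with h0 | hpos'
    · exact hnz h0
    · rw [order_polyEmb hne] at hpos'
      omega
  exact sub_eq_zero.mp hp


end PaperCF
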